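/- Let r > 0 be real, q a natural number, Λ_R > 0, and let P be a polynomial of degree at most q with nonnegative coefficients. Then there exists a polynomial Q of degree at most q+1 with nonnegative coefficients, depending only on P, q, r (and not on Λ₀ or f), such that the following holds: for every Λ₀ ≥ Λ_R and every f : ℝ → ℝ differentiable on [Λ_R, Λ₀] satisfying (i) |x · f'(x)| ≤ x^(-r) · P(Real.log(x/Λ_R)) for all x ∈ [Λ_R, Λ₀], and (ii) |f(Λ₀)| ≤ Λ₀^(-r) · P(Real.log(Λ₀/Λ_R)), one has |f(Λ)| ≤ Λ^(-r) · Q(Real.log(Λ/Λ_R)) for all Λ ∈ [Λ_R, Λ₀]. -/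

import Mathlib

open Polynomial Real Finset

lemma eval_nonneg_of_coeff_nonneg (P : Polynomial ℝ) (h : ∀ k, 0 ≤ P.coeff k)
    {x : ℝ} (hx : 0 ≤ x) : 0 ≤ P.eval x := by
  rw [Polynomial.eval_eq_sum_range]
  exact Finset.sum_nonneg fun i _ => mul_nonneg (h i) (pow_nonneg hx i)

lemma iter_deriv_coeff_nonneg (P : Polynomial ℝ) (h : ∀ k, 0 ≤ P.coeff k) (j : ℕ) :
    ∀ k, 0 ≤ (Polynomial.derivative^[j] P).coeff k := by
  induction j with
  | zero => exact h
  | succ n ih =>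
      rw [Function.iterate_succ_apply']
      intro k
      rw [Polynomial.coeff_derivative]
      exact mul_nonneg (ih _) (by positivity)

lemma key_exp_ineq (r : ℝ) (hr : 0 < r) (t s : ℝ) (ht : 0 ≤ t) (hs : 0 ≤ s) (k : ℕ) :
    Real.exp (-(r * s)) * (t + s) ^ k ≤ 2 ^ k * t ^ k + 2 ^ k * (k.factorial / r ^ k) := by
  have h1 : (t + s) ^ k ≤ 2 ^ k * (t ^ k + s ^ k) := by
    calc (t + s) ^ k ≤ (2 * max t s) ^ k := by
          apply pow_le_pow_left₀ (by positivity)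
          rcases le_total t s with h | h
          · simp [max_eq_right h]; linarith
          · simp [max_eq_left h]; linarith
      _ = 2 ^ k * (max t s) ^ k := mul_pow _ _ _
      _ ≤ 2 ^ k * (t ^ k + s ^ k) := by
          apply mul_le_mul_of_nonneg_left _ (by positivity)
          rcases le_total t s with h | h
          · rw [max_eq_right h]; nlinarith [pow_nonneg ht k]
          · rw [max_eq_left h]; nlinarith [pow_nonneg hs k]
  have h2 : Real.exp (-(r * s)) * s ^ k ≤ k.factorial / r ^ k := by
    have hb : (r * s) ^ k / k.factorial ≤ Real.exp (r * s) :=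
      Real.pow_div_factorial_le_exp _ (mul_nonneg hr.le hs) k
    have hfac : (0:ℝ) < k.factorial := by positivity
    have hrk : (0:ℝ) < r ^ k := by positivity
    rw [Real.exp_neg]
    rw [inv_mul_le_iff₀ (Real.exp_pos _), ← mul_div_assoc, le_div_iff₀ hrk]
    rw [div_le_iff₀ hfac, mul_pow] at hb
    nlinarith [Real.exp_pos (r * s), pow_nonneg hs k]
  have h4 : Real.exp (-(r*s)) * t ^ k ≤ t ^ k := by
    nlinarith [pow_nonneg ht k, Real.exp_pos (-(r*s)), Real.exp_le_one_iff.2 (by nlinarith : -(r*s) ≤ 0)]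
  calc Real.exp (-(r * s)) * (t + s) ^ k
      ≤ Real.exp (-(r * s)) * (2 ^ k * (t ^ k + s ^ k)) :=
        mul_le_mul_of_nonneg_left h1 (Real.exp_pos _).le
    _ = 2 ^ k * (Real.exp (-(r*s)) * t ^ k) + 2 ^ k * (Real.exp (-(r*s)) * s ^ k) := by ring
    _ ≤ 2 ^ k * t ^ k + 2 ^ k * (k.factorial / r ^ k) := by
        have : (0:ℝ) ≤ 2 ^ k := by positivity
        gcongr

lemma R_exists (r : ℝ) (hr : 0 < r) (q : ℕ) (P : Polynomial ℝ)
    (hPdeg : P.natDegree ≤ q) (hPpos : ∀ k, 0 ≤ P.coeff k) :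
    ∃ R : Polynomial ℝ, R.natDegree ≤ q ∧ (∀ k, 0 ≤ R.coeff k) ∧
      r • R - Polynomial.derivative R = P := by
  refine ⟨∑ j ∈ Finset.range (q+1), (r⁻¹) ^ (j+1) • Polynomial.derivative^[j] P, ?_, ?_, ?_⟩
  · refine Polynomial.natDegree_sum_le_of_forall_le _ _ fun j _ => ?_
    exact (Polynomial.natDegree_smul_le _ _).trans
      ((Polynomial.natDegree_iterate_derivative P j).trans (Nat.sub_le _ _ |>.trans hPdeg))
  · intro k
    rw [Polynomial.finset_sum_coeff]
    refine Finset.sum_nonneg fun j _ => ?_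
    rw [Polynomial.coeff_smul]
    exact mul_nonneg (by positivity) (iter_deriv_coeff_nonneg P hPpos j k)
  · have hS : ∀ j ∈ Finset.range (q+1),
        r • ((r⁻¹) ^ (j+1) • Polynomial.derivative^[j] P)
          - Polynomial.derivative ((r⁻¹) ^ (j+1) • Polynomial.derivative^[j] P)
        = (r⁻¹) ^ j • Polynomial.derivative^[j] P
          - (r⁻¹) ^ (j+1) • Polynomial.derivative^[j+1] P := by
      intro j _
      rw [Polynomial.derivative_smul, smul_smul,
        ← Function.iterate_succ_apply' (⇑Polynomial.derivative) j P]
      congr 2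
      field_simp
      rw [pow_succ, mul_comm, mul_assoc, one_div, inv_mul_cancel₀ hr.ne', mul_one]
    rw [Finset.smul_sum, map_sum, ← Finset.sum_sub_distrib]
    rw [Finset.sum_congr rfl hS, Finset.sum_range_sub']
    simp only [pow_zero, one_smul, Function.iterate_zero_apply]
    rw [Polynomial.iterate_derivative_eq_zero (Nat.lt_succ_of_le hPdeg), smul_zero, sub_zero]

lemma hasDerivAt_B (r : ℝ) (ΛR : ℝ) (hΛR : 0 < ΛR)
    (R P : Polynomial ℝ) (hRP : r • R - Polynomial.derivative R = P)
    {x : ℝ} (hx : 0 < x) :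
    HasDerivAt (fun y => y ^ (-r) * R.eval (Real.log (y / ΛR)))
      (-(x ^ (-r - 1) * P.eval (Real.log (x / ΛR)))) x := by
  have hL : HasDerivAt (fun y => Real.log (y / ΛR)) x⁻¹ x := by
    have h1 : HasDerivAt (fun y : ℝ => y / ΛR) (1 / ΛR) x := (hasDerivAt_id x).div_const ΛR
    have h2 := (Real.hasDerivAt_log (div_ne_zero hx.ne' hΛR.ne')).comp x h1
    refine h2.congr_deriv (Eq.symm ?_)
    field_simp
  have hRe : HasDerivAt (fun y => R.eval (Real.log (y / ΛR)))
      (R.derivative.eval (Real.log (x / ΛR)) * x⁻¹) x :=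
    by have := HasDerivAt.comp x (R.hasDerivAt (Real.log (x / ΛR))) hL; exact this
  have hpow : HasDerivAt (fun y : ℝ => y ^ (-r)) (-r * x ^ (-r - 1)) x :=
    Real.hasDerivAt_rpow_const (Or.inl hx.ne')
  have h := hpow.mul hRe
  refine h.congr_deriv (Eq.symm ?_)
  have hx1 : x ^ (-r) * x⁻¹ = x ^ (-r - 1) := by
    rw [← Real.rpow_neg_one x, ← Real.rpow_add hx]
    norm_num [sub_eq_add_neg]
  have hP : P.eval (Real.log (x / ΛR))
      = r * R.eval (Real.log (x / ΛR)) - R.derivative.eval (Real.log (x / ΛR)) := by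
    rw [← hRP]; simp [Polynomial.eval_smul, smul_eq_mul]
  rw [hP]
  linear_combination -(Polynomial.eval (Real.log (x / ΛR)) (Polynomial.derivative R)) * hx1


/-- Irrelevant case of Definition/Lemma 1: a coupling with
`|x f'(x)| ≤ x^(-r) P(log(x/Λ_R))` on `[Λ_R, Λ₀]` and initial value at `Λ₀`
bounded by `Λ₀^(-r) P(log(Λ₀/Λ_R))` satisfies, uniformly in `Λ₀`,
`|f(Λ)| ≤ Λ^(-r) Q(log(Λ/Λ_R))` for some polynomial `Q` of degree `≤ q+1`
with nonnegative coefficients depending only on `P`, `q`, `r`. -/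
theorem irrelevant_coupling_estimate (r : ℝ) (hr : 0 < r) (q : ℕ)
    (ΛR : ℝ) (hΛR : 0 < ΛR)
    (P : Polynomial ℝ) (hPdeg : P.natDegree ≤ q) (hPpos : ∀ k, 0 ≤ P.coeff k) :
    ∃ Q : Polynomial ℝ, Q.natDegree ≤ q + 1 ∧ (∀ k, 0 ≤ Q.coeff k) ∧
      ∀ Λ₀ : ℝ, ΛR ≤ Λ₀ →
      ∀ f f' : ℝ → ℝ,
        (∀ x ∈ Set.Icc ΛR Λ₀, HasDerivWithinAt f (f' x) (Set.Icc ΛR Λ₀) x) →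
        (∀ x ∈ Set.Icc ΛR Λ₀,
          |x * f' x| ≤ x ^ (-r) * P.eval (Real.log (x / ΛR))) →
        |f Λ₀| ≤ Λ₀ ^ (-r) * P.eval (Real.log (Λ₀ / ΛR)) →
        ∀ Λ ∈ Set.Icc ΛR Λ₀,
          |f Λ| ≤ Λ ^ (-r) * Q.eval (Real.log (Λ / ΛR)) := by
  obtain ⟨R, hRdeg, hRpos, hRP⟩ := R_exists r hr q P hPdeg hPpos
  set Q₂ : Polynomial ℝ := ∑ k ∈ Finset.range (q+1),
    (Polynomial.C (P.coeff k * 2 ^ k) * Polynomial.X ^ k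
      + Polynomial.C (P.coeff k * 2 ^ k * (k.factorial / r ^ k))) with hQ₂def
  have hQ₂deg : Q₂.natDegree ≤ q := by
    refine Polynomial.natDegree_sum_le_of_forall_le _ _ fun k hk => ?_
    refine (Polynomial.natDegree_add_le _ _).trans (max_le ?_ ?_)
    · exact (Polynomial.natDegree_C_mul_le _ _).trans
        (by simpa using Nat.lt_succ_iff.1 (Finset.mem_range.1 hk))
    · exact (Polynomial.natDegree_C _).trans_le (Nat.zero_le q)
  have hQ₂pos : ∀ k, 0 ≤ Q₂.coeff k := by
    intro n
    rw [hQ₂def, Polynomial.finset_sum_coeff]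
    refine Finset.sum_nonneg fun k _ => ?_
    have h1 : (0:ℝ) ≤ P.coeff k * 2 ^ k := mul_nonneg (hPpos k) (by positivity)
    have h2 : (0:ℝ) ≤ P.coeff k * 2 ^ k * (k.factorial / r ^ k) :=
      mul_nonneg h1 (by positivity)
    rw [Polynomial.coeff_add, Polynomial.coeff_C_mul, Polynomial.coeff_X_pow,
      Polynomial.coeff_C]
    split_ifs <;> simp only [mul_one, mul_zero, add_zero, zero_add] <;> linarith
  have hQ₂eval : ∀ u : ℝ, Q₂.eval u = ∑ k ∈ Finset.range (q+1),
      (P.coeff k * 2 ^ k * u ^ k + P.coeff k * 2 ^ k * (k.factorial / r ^ k)) := by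
    intro u
    rw [hQ₂def, Polynomial.eval_finset_sum]
    simp
  refine ⟨R + Q₂, ?_, ?_, ?_⟩
  · exact (Polynomial.natDegree_add_le _ _).trans
      (max_le (hRdeg.trans (Nat.le_succ q)) (hQ₂deg.trans (Nat.le_succ q)))
  · intro k
    rw [Polynomial.coeff_add]
    exact add_nonneg (hRpos k) (hQ₂pos k)
  intro Λ₀ hΛ₀ f f' hderiv hbound hinit Λ hΛ
  have hΛpos : 0 < Λ := lt_of_lt_of_le hΛR hΛ.1
  have hΛ₀pos : 0 < Λ₀ := lt_of_lt_of_le hΛR hΛ₀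
  have hxpos : ∀ x ∈ Set.Icc ΛR Λ₀, 0 < x := fun x hx => lt_of_lt_of_le hΛR hx.1
  set B : ℝ → ℝ := fun x => x ^ (-r) * R.eval (Real.log (x / ΛR)) with hBdef
  have hB : ∀ x ∈ Set.Icc ΛR Λ₀,
      HasDerivAt B (-(x ^ (-r - 1) * P.eval (Real.log (x / ΛR)))) x :=
    fun x hx => hasDerivAt_B r ΛR hΛR R P hRP (hxpos x hx)
  -- bound on |f'|
  have habs : ∀ x ∈ Set.Icc ΛR Λ₀, |f' x| ≤ x ^ (-r - 1) * P.eval (Real.log (x / ΛR)) := by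
    intro x hx
    have hxp := hxpos x hx
    have h1 : x * |f' x| ≤ x ^ (-r) * P.eval (Real.log (x / ΛR)) := by
      have := hbound x hx
      rwa [abs_mul, abs_of_pos hxp] at this
    have hx1 : x ^ (-r) * x⁻¹ = x ^ (-r - 1) := by
      rw [← Real.rpow_neg_one x, ← Real.rpow_add hxp]
      norm_num [sub_eq_add_neg]
    have h3 := mul_le_mul_of_nonneg_right h1 (inv_nonneg.2 hxp.le)
    rw [mul_comm x _, mul_assoc, mul_inv_cancel₀ hxp.ne', mul_one] at h3
    calc |f' x| ≤ x ^ (-r) * P.eval (Real.log (x / ΛR)) * x⁻¹ := h3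
      _ = x ^ (-r) * x⁻¹ * P.eval (Real.log (x / ΛR)) := by ring
      _ = x ^ (-r - 1) * P.eval (Real.log (x / ΛR)) := by rw [hx1]
  -- monotone: f - B
  have hmono : MonotoneOn (fun x => f x - B x) (Set.Icc ΛR Λ₀) := by
    apply monotoneOn_of_hasDerivWithinAt_nonneg (convex_Icc ΛR Λ₀)
      (f' := fun x => f' x - (-(x ^ (-r - 1) * P.eval (Real.log (x / ΛR)))))
    · exact fun x hx =>
        ((hderiv x hx).sub ((hB x hx).hasDerivWithinAt)).continuousWithinAt
    · intro x hx
      have hx' : x ∈ Set.Icc ΛR Λ₀ := interior_subset hx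
      exact ((hderiv x hx').sub ((hB x hx').hasDerivWithinAt)).mono interior_subset
    · intro x hx
      have hx' : x ∈ Set.Icc ΛR Λ₀ := interior_subset hx
      have := habs x hx'
      have h := neg_abs_le (f' x)
      linarith
  -- antitone: f + B
  have hanti : AntitoneOn (fun x => f x + B x) (Set.Icc ΛR Λ₀) := by
    apply antitoneOn_of_hasDerivWithinAt_nonpos (convex_Icc ΛR Λ₀)
      (f' := fun x => f' x + (-(x ^ (-r - 1) * P.eval (Real.log (x / ΛR)))))
    · exact fun x hx =>
        ((hderiv x hx).add ((hB x hx).hasDerivWithinAt)).continuousWithinAt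
    · intro x hx
      have hx' : x ∈ Set.Icc ΛR Λ₀ := interior_subset hx
      exact ((hderiv x hx').add ((hB x hx').hasDerivWithinAt)).mono interior_subset
    · intro x hx
      have hx' : x ∈ Set.Icc ΛR Λ₀ := interior_subset hx
      have := habs x hx'
      have h := le_abs_self (f' x)
      linarith
  have hΛ₀mem : Λ₀ ∈ Set.Icc ΛR Λ₀ := ⟨hΛ₀, le_refl _⟩
  have hBΛ₀ : 0 ≤ B Λ₀ := by
    apply mul_nonneg (Real.rpow_nonneg hΛ₀pos.le _)
    exact eval_nonneg_of_coeff_nonneg R hRpos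
      (Real.log_nonneg ((one_le_div hΛR).2 hΛ₀))
  have hBΛ : 0 ≤ B Λ := by
    apply mul_nonneg (Real.rpow_nonneg hΛpos.le _)
    exact eval_nonneg_of_coeff_nonneg R hRpos
      (Real.log_nonneg ((one_le_div hΛR).2 hΛ.1))
  have hfB : |f Λ| ≤ |f Λ₀| + B Λ := by
    have h1 := hmono hΛ hΛ₀mem hΛ.2
    have h2 := hanti hΛ hΛ₀mem hΛ.2
    simp only at h1 h2
    rw [abs_le]
    constructor
    · have := neg_abs_le (f Λ₀); linarith
    · have := le_abs_self (f Λ₀); linarith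
  -- key inequality : Λ₀^(-r) * P.eval (log (Λ₀/ΛR)) ≤ Λ^(-r) * Q₂.eval (log (Λ/ΛR))
  set u : ℝ := Real.log (Λ / ΛR) with hu_def
  set s : ℝ := Real.log (Λ₀ / ΛR) - u with hs_def
  have hu : 0 ≤ u := Real.log_nonneg ((one_le_div hΛR).2 hΛ.1)
  have hs' : s = Real.log Λ₀ - Real.log Λ := by
    rw [hs_def, hu_def, Real.log_div hΛ₀pos.ne' hΛR.ne', Real.log_div hΛpos.ne' hΛR.ne']
    ring
  have hs : 0 ≤ s := by
    rw [hs']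
    have := Real.log_le_log hΛpos hΛ.2
    linarith
  have hΛ₀r : Λ₀ ^ (-r) = Λ ^ (-r) * Real.exp (-(r * s)) := by
    rw [Real.rpow_def_of_pos hΛ₀pos, Real.rpow_def_of_pos hΛpos, ← Real.exp_add]
    congr 1
    rw [hs']
    ring
  have hkey : Λ₀ ^ (-r) * P.eval (Real.log (Λ₀ / ΛR)) ≤ Λ ^ (-r) * Q₂.eval u := by
    have htΛ₀ : Real.log (Λ₀ / ΛR) = u + s := by rw [hs_def]; ring
    rw [htΛ₀, hΛ₀r, hQ₂eval u]
    rw [Polynomial.eval_eq_sum_range' (Nat.lt_succ_of_le hPdeg)]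
    rw [mul_assoc, Finset.mul_sum, Finset.mul_sum, Finset.mul_sum]
    refine Finset.sum_le_sum fun k _ => ?_
    have hΛr : (0:ℝ) ≤ Λ ^ (-r) := Real.rpow_nonneg hΛpos.le _
    have hterm := mul_le_mul_of_nonneg_left (key_exp_ineq r hr u s hu hs k) (hPpos k)
    calc Λ ^ (-r) * (Real.exp (-(r * s)) * (P.coeff k * (u + s) ^ k))
        = Λ ^ (-r) * (P.coeff k * (Real.exp (-(r * s)) * (u + s) ^ k)) := by ring
      _ ≤ Λ ^ (-r) * (P.coeff k * (2 ^ k * u ^ k + 2 ^ k * (k.factorial / r ^ k))) :=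
          mul_le_mul_of_nonneg_left hterm hΛr
      _ = Λ ^ (-r) * (P.coeff k * 2 ^ k * u ^ k + P.coeff k * 2 ^ k * (k.factorial / r ^ k)) := by
          ring
  calc |f Λ| ≤ |f Λ₀| + B Λ := hfB
    _ ≤ Λ₀ ^ (-r) * P.eval (Real.log (Λ₀ / ΛR)) + B Λ := by linarith
    _ ≤ Λ ^ (-r) * Q₂.eval u + Λ ^ (-r) * R.eval u := by
        rw [hBdef]
        simp only []
        linarith [hkey]
    _ = Λ ^ (-r) * (R + Q₂).eval (Real.log (Λ / ΛR)) := by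
        rw [Polynomial.eval_add, ← hu_def]
        ring
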